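/- Let J be a finite nonempty index set and φ_j an fPIL formula over a finite set of ports P for each j ∈ J. Then ¬(⊎_{j∈J} φ_j) ≡ (⊕_{j∈J} !φ_j) ⊕ ~(⋀f_{j∈J} !φ_j) as fPCL formulas. -/
import Mathlib


/-- A De Morgan algebra: a bounded distributive lattice equipped with a
complement map satisfying involution and the De Morgan laws. -/
class DeMorganAlg (K : Type) extends DistribLattice K, BoundedOrder K where
  compl : K → K
  compl_compl : ∀ k : K, compl (compl k) = k
  compl_sup : ∀ k k' : K, compl (k ⊔ k') = compl k ⊓ compl k'
  compl_inf : ∀ k k' : K, compl (k ⊓ k') = compl k ⊔ compl k'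

/-- fPIL formulas over the set of ports `P`. -/
inductive fPIL (P : Type) : Type where
  | tt : fPIL P
  | port : P → fPIL P
  | fnot : fPIL P → fPIL P
  | fdisj : fPIL P → fPIL P → fPIL P

/-- Fuzzy conjunction of fPIL formulas. -/
def fPIL.fconj {P : Type} (φ₁ φ₂ : fPIL P) : fPIL P :=
  .fnot (.fdisj (.fnot φ₁) (.fnot φ₂))

/-- The fPIL formula `false`. -/
def fPIL.ff {P : Type} : fPIL P := .fnot .tt

/-- K-fuzzy interactions on `P`: maps `a : P → K` with `a p ≠ 0` for some port `p`. -/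
def fI (P K : Type) [DeMorganAlg K] : Type := {a : P → K // ∃ p : P, a p ≠ ⊥}

/-- Semantics of fPIL formulas. -/
def fPIL.sem {P K : Type} [DeMorganAlg K] : fPIL P → fI P K → K
  | .tt, _ => ⊤
  | .port p, a => a.1 p
  | .fnot φ, a => DeMorganAlg.compl (φ.sem a)
  | .fdisj φ₁ φ₂, a => φ₁.sem a ⊔ φ₂.sem a

/-- Equivalence of fPIL formulas: equal semantics over every De Morgan algebra
and every fuzzy interaction. -/
def pilEquiv {P : Type} (φ₁ φ₂ : fPIL P) : Prop :=
  ∀ (K : Type) [DeMorganAlg K] (a : fI P K), φ₁.sem a = φ₂.sem a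
noncomputable instance {P K : Type} [DeMorganAlg K] : DecidableEq (fI P K) :=
  Classical.decEq _

/-- fPCL formulas over the set of ports `P`. -/
inductive fPCL (P : Type) : Type where
  | pil : fPIL P → fPCL P
  | cneg : fPCL P → fPCL P
  | oplus : fPCL P → fPCL P → fPCL P
  | coal : fPCL P → fPCL P → fPCL P

/-- Fuzzy conjunction `⊗` of fPCL formulas. -/
def fPCL.otimes {P : Type} (ζ₁ ζ₂ : fPCL P) : fPCL P :=
  .cneg (.oplus (.cneg ζ₁) (.cneg ζ₂))

/-- The closure operator `~ζ := ζ ⊎ true`. -/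
def fPCL.closure {P : Type} (ζ : fPCL P) : fPCL P := .coal ζ (.pil .tt)

/-- Semantics of fPCL formulas on finite sets of fuzzy interactions. -/
noncomputable def fPCL.sem {P K : Type} [DeMorganAlg K] :
    fPCL P → Finset (fI P K) → K
  | .pil φ, γ => γ.inf fun a => φ.sem a
  | .cneg ζ, γ => DeMorganAlg.compl (ζ.sem γ)
  | .oplus ζ₁ ζ₂, γ => ζ₁.sem γ ⊔ ζ₂.sem γ
  | .coal ζ₁ ζ₂, γ =>
      ((γ.powerset ×ˢ γ.powerset).filter fun q =>
          q.1.Nonempty ∧ q.2.Nonempty ∧ q.1 ∪ q.2 = γ).sup fun q =>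
        ζ₁.sem q.1 ⊓ ζ₂.sem q.2

/-- Equivalence of fPCL formulas: equal semantics over every De Morgan algebra
and every nonempty finite set of fuzzy interactions. -/
def pclEquiv {P : Type} (ζ₁ ζ₂ : fPCL P) : Prop :=
  ∀ (K : Type) [DeMorganAlg K] (γ : Finset (fI P K)), γ.Nonempty →
    ζ₁.sem γ = ζ₂.sem γ
/-- Iterated fuzzy disjunction `⋁f_{j∈Fin (n+1)} φ j` of fPIL formulas over the
finite nonempty index set `Fin (n+1)`. -/
def fPIL.bigDisj {P : Type} : (n : ℕ) → (Fin (n + 1) → fPIL P) → fPIL P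
  | 0, φ => φ 0
  | n + 1, φ => .fdisj (fPIL.bigDisj n fun i => φ i.castSucc) (φ (Fin.last (n + 1)))

/-- Iterated fuzzy conjunction `⋀f_{j∈Fin (n+1)} φ j` of fPIL formulas. -/
def fPIL.bigConj {P : Type} : (n : ℕ) → (Fin (n + 1) → fPIL P) → fPIL P
  | 0, φ => φ 0
  | n + 1, φ => fPIL.fconj (fPIL.bigConj n fun i => φ i.castSucc) (φ (Fin.last (n + 1)))

/-- Iterated coalescing `⊎_{j∈Fin (n+1)} ζ j` of fPCL formulas. -/
def fPCL.bigCoal {P : Type} : (n : ℕ) → (Fin (n + 1) → fPCL P) → fPCL P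
  | 0, ζ => ζ 0
  | n + 1, ζ => .coal (fPCL.bigCoal n fun i => ζ i.castSucc) (ζ (Fin.last (n + 1)))

/-- Iterated fuzzy conjunction `⊗_{j∈Fin (n+1)} ζ j` of fPCL formulas. -/
def fPCL.bigOtimes {P : Type} : (n : ℕ) → (Fin (n + 1) → fPCL P) → fPCL P
  | 0, ζ => ζ 0
  | n + 1, ζ => (fPCL.bigOtimes n fun i => ζ i.castSucc).otimes (ζ (Fin.last (n + 1)))

/-- Iterated fuzzy disjunction `⊕_{j∈Fin (n+1)} ζ j` of fPCL formulas. -/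
def fPCL.bigOplus {P : Type} : (n : ℕ) → (Fin (n + 1) → fPCL P) → fPCL P
  | 0, ζ => ζ 0
  | n + 1, ζ => .oplus (fPCL.bigOplus n fun i => ζ i.castSucc) (ζ (Fin.last (n + 1)))
/-! ### Auxiliary lemmas -/

section Aux

variable {K : Type} [DeMorganAlg K]

lemma dm_compl_top : DeMorganAlg.compl (⊤ : K) = ⊥ := by
  have h : ∀ k : K, DeMorganAlg.compl (⊤ : K) ≤ DeMorganAlg.compl k := by
    intro k
    calc DeMorganAlg.compl (⊤ : K) = DeMorganAlg.compl (⊤ ⊔ k) := by rw [top_sup_eq]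
      _ = DeMorganAlg.compl ⊤ ⊓ DeMorganAlg.compl k := DeMorganAlg.compl_sup _ _
      _ ≤ DeMorganAlg.compl k := inf_le_right
  have h2 := h (DeMorganAlg.compl ⊥)
  rw [DeMorganAlg.compl_compl] at h2
  exact le_antisymm h2 bot_le

lemma dm_compl_bot : DeMorganAlg.compl (⊥ : K) = ⊤ := by
  conv_lhs => rw [← dm_compl_top (K := K), DeMorganAlg.compl_compl]

lemma dm_compl_finset_inf {ι : Type} (s : Finset ι) (f : ι → K) :
    DeMorganAlg.compl (s.inf f) = s.sup fun i => DeMorganAlg.compl (f i) := by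
  induction s using Finset.cons_induction with
  | empty => simp [dm_compl_top]
  | cons a s ha ih =>
      simp [Finset.inf_cons, Finset.sup_cons, DeMorganAlg.compl_inf, ih]

lemma dm_compl_finset_sup {ι : Type} (s : Finset ι) (f : ι → K) :
    DeMorganAlg.compl (s.sup f) = s.inf fun i => DeMorganAlg.compl (f i) := by
  induction s using Finset.cons_induction with
  | empty => simp [dm_compl_bot]
  | cons a s ha ih =>
      simp [Finset.inf_cons, Finset.sup_cons, DeMorganAlg.compl_sup, ih]

lemma inf_univ_castSucc' {α : Type*} [SemilatticeInf α] [OrderTop α] {n : ℕ}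
    (f : Fin (n + 1) → α) :
    Finset.univ.inf f = (Finset.univ.inf fun i : Fin n => f i.castSucc) ⊓ f (Fin.last n) := by
  rw [Fin.univ_castSuccEmb, Finset.inf_cons, Finset.inf_map]
  exact inf_comm _ _

lemma sup_univ_castSucc' {α : Type*} [SemilatticeSup α] [OrderBot α] {n : ℕ}
    (f : Fin (n + 1) → α) :
    Finset.univ.sup f = (Finset.univ.sup fun i : Fin n => f i.castSucc) ⊔ f (Fin.last n) := by
  rw [Fin.univ_castSuccEmb, Finset.sup_cons, Finset.sup_map]
  exact sup_comm _ _

lemma inf_univ_fin_one {α : Type*} [SemilatticeInf α] [OrderTop α] (f : Fin 1 → α) :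
    Finset.univ.inf f = f 0 := by simp

lemma sup_univ_fin_one {α : Type*} [SemilatticeSup α] [OrderBot α] (f : Fin 1 → α) :
    Finset.univ.sup f = f 0 := by simp

lemma fconj_sem {P : Type} (φ₁ φ₂ : fPIL P) (a : fI P K) :
    (φ₁.fconj φ₂).sem a = φ₁.sem a ⊓ φ₂.sem a := by
  simp [fPIL.fconj, fPIL.sem, DeMorganAlg.compl_sup, DeMorganAlg.compl_compl]

lemma bigConj_sem {P : Type} (n : ℕ) (ψ : Fin (n + 1) → fPIL P) (a : fI P K) :
    (fPIL.bigConj n ψ).sem a = Finset.univ.inf fun j => (ψ j).sem a := by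
  induction n with
  | zero => rw [fPIL.bigConj, inf_univ_fin_one]
  | succ n ih =>
      rw [fPIL.bigConj, fconj_sem, ih]
      conv_rhs => rw [inf_univ_castSucc']

lemma pil_sem {P : Type} (φ : fPIL P) (γ : Finset (fI P K)) :
    (fPCL.pil φ).sem γ = γ.inf fun a => φ.sem a := rfl

lemma bigOplus_sem {P : Type} (n : ℕ) (ψ : Fin (n + 1) → fPIL P) (γ : Finset (fI P K)) :
    (fPCL.bigOplus n fun j => .pil (ψ j)).sem γ
      = Finset.univ.sup fun j => γ.inf fun a => (ψ j).sem a := by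
  induction n with
  | zero => rw [fPCL.bigOplus, pil_sem, sup_univ_fin_one]
  | succ n ih =>
      rw [show (fPCL.bigOplus (n + 1) fun j => .pil (ψ j))
          = .oplus (fPCL.bigOplus n fun i => .pil (ψ i.castSucc))
              (.pil (ψ (Fin.last (n + 1)))) from rfl]
      show (fPCL.bigOplus n fun i => .pil (ψ i.castSucc)).sem γ
          ⊔ (fPCL.pil (ψ (Fin.last (n + 1)))).sem γ = _
      rw [ih, pil_sem]
      conv_rhs => rw [sup_univ_castSucc']

lemma closure_pil_sem {P : Type} (ψ : fPIL P) (γ : Finset (fI P K)) (hγ : γ.Nonempty) :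
    (fPCL.closure (.pil ψ)).sem γ = γ.sup fun a => ψ.sem a := by
  show ((γ.powerset ×ˢ γ.powerset).filter fun q =>
      q.1.Nonempty ∧ q.2.Nonempty ∧ q.1 ∪ q.2 = γ).sup
        (fun q => (fPCL.pil ψ).sem q.1 ⊓ (fPCL.pil fPIL.tt).sem q.2) = _
  apply le_antisymm
  · apply Finset.sup_le
    intro q hq
    simp only [Finset.mem_filter, Finset.mem_product, Finset.mem_powerset] at hq
    obtain ⟨⟨hq1, _⟩, hne1, _, _⟩ := hq
    obtain ⟨a, ha⟩ := hne1
    refine le_trans inf_le_left ?_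
    rw [pil_sem]
    exact le_trans (Finset.inf_le ha) (Finset.le_sup (hq1 ha))
  · apply Finset.sup_le
    intro a ha
    have hmem : (({a} : Finset (fI P K)), γ) ∈ (γ.powerset ×ˢ γ.powerset).filter fun q =>
        q.1.Nonempty ∧ q.2.Nonempty ∧ q.1 ∪ q.2 = γ := by
      simp only [Finset.mem_filter, Finset.mem_product, Finset.mem_powerset]
      exact ⟨⟨Finset.singleton_subset_iff.2 ha, Finset.Subset.refl _⟩,
        Finset.singleton_nonempty a, hγ,
        Finset.union_eq_right.2 (Finset.singleton_subset_iff.2 ha)⟩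
    refine le_trans ?_ (Finset.le_sup hmem)
    apply le_inf
    · rw [pil_sem, Finset.inf_singleton]
    · exact le_trans le_top (Finset.le_inf fun b _ => le_top)

/-- The set of covers of `γ` by `n+1` nonempty subsets. -/
noncomputable def covers {P : Type} (n : ℕ) (γ : Finset (fI P K)) :
    Finset (Fin (n + 1) → Finset (fI P K)) :=
  (Fintype.piFinset fun _ => γ.powerset).filter fun σ =>
    (∀ j, (σ j).Nonempty) ∧ Finset.univ.sup σ = γ

lemma mem_covers {P : Type} {n : ℕ} {γ : Finset (fI P K)}
    {σ : Fin (n + 1) → Finset (fI P K)} :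
    σ ∈ covers n γ ↔ (∀ j, σ j ⊆ γ) ∧ (∀ j, (σ j).Nonempty) ∧ Finset.univ.sup σ = γ := by
  simp [covers, Fintype.mem_piFinset]

/-- Closed form for the semantics of an iterated coalescing of fPIL formulas. -/
lemma bigCoal_sem {P : Type} (n : ℕ) (φ : Fin (n + 1) → fPIL P)
    (γ : Finset (fI P K)) (hγ : γ.Nonempty) :
    (fPCL.bigCoal n fun j => .pil (φ j)).sem γ
      = (covers n γ).sup fun σ =>
          Finset.univ.inf fun j => (σ j).inf fun a => (φ j).sem a := by
  induction n generalizing γ hγ with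
  | zero =>
      rw [fPCL.bigCoal, pil_sem]
      apply le_antisymm
      · have hmem : (fun _ : Fin 1 => γ) ∈ covers 0 γ := by
          refine mem_covers.2 ⟨fun _ => Finset.Subset.refl _, fun _ => hγ, ?_⟩
          exact Finset.sup_const Finset.univ_nonempty _
        refine le_trans ?_ (Finset.le_sup hmem)
        apply Finset.le_inf
        intro j _
        have hj : j = 0 := Fin.eq_zero j
        subst hj
        exact le_rfl
      · apply Finset.sup_le
        intro σ hσ
        obtain ⟨hsub, _, hsup⟩ := mem_covers.1 hσ
        have h0 : σ 0 = γ := by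
          apply Finset.Subset.antisymm (hsub 0)
          intro a ha
          rw [← hsup] at ha
          rcases Finset.mem_sup.1 ha with ⟨j, _, hj⟩
          have hj0 : j = 0 := Fin.eq_zero j
          rwa [hj0] at hj
        refine le_trans (Finset.inf_le (Finset.mem_univ 0)) ?_
        rw [h0]
  | succ n ih =>
      rw [show (fPCL.bigCoal (n + 1) fun j => .pil (φ j))
          = .coal (fPCL.bigCoal n fun i => .pil (φ i.castSucc))
              (.pil (φ (Fin.last (n + 1)))) from rfl]
      show ((γ.powerset ×ˢ γ.powerset).filter fun q =>
          q.1.Nonempty ∧ q.2.Nonempty ∧ q.1 ∪ q.2 = γ).sup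
            (fun q => (fPCL.bigCoal n fun i => .pil (φ i.castSucc)).sem q.1
              ⊓ (fPCL.pil (φ (Fin.last (n + 1)))).sem q.2) = _
      apply le_antisymm
      · apply Finset.sup_le
        intro q hq
        simp only [Finset.mem_filter, Finset.mem_product, Finset.mem_powerset] at hq
        obtain ⟨⟨h1, h2⟩, hne1, hne2, hun⟩ := hq
        rw [ih _ _ hne1, pil_sem, Finset.sup_inf_distrib_right]
        apply Finset.sup_le
        intro σ' hσ'
        obtain ⟨hsub', hne', hsup'⟩ := mem_covers.1 hσ'
        have hmem : (fun j => Fin.lastCases q.2 σ' j) ∈ covers (n + 1) γ := by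
          refine mem_covers.2 ⟨?_, ?_, ?_⟩
          · intro j
            induction j using Fin.lastCases with
            | last => simpa using h2
            | cast i => simpa using (hsub' i).trans h1
          · intro j
            induction j using Fin.lastCases with
            | last => simpa using hne2
            | cast i => simpa using hne' i
          · rw [sup_univ_castSucc']
            simp only [Fin.lastCases_castSucc, Fin.lastCases_last]
            rw [hsup', Finset.sup_eq_union, hun]
        refine le_trans ?_ (Finset.le_sup hmem)
        conv_rhs => rw [inf_univ_castSucc']
        simp only [Fin.lastCases_castSucc, Fin.lastCases_last]
        exact le_rfl
      · apply Finset.sup_le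
        intro σ hσ
        obtain ⟨hsub, hne, hsup⟩ := mem_covers.1 hσ
        have hδsub : (Finset.univ.sup fun i : Fin (n + 1) => σ i.castSucc) ⊆ γ :=
          Finset.sup_le fun i _ => hsub _
        have hδne : (Finset.univ.sup fun i : Fin (n + 1) => σ i.castSucc).Nonempty := by
          refine (hne ((0 : Fin (n + 1)).castSucc)).mono ?_
          exact Finset.le_sup (f := fun i : Fin (n + 1) => σ i.castSucc) (Finset.mem_univ (0 : Fin (n + 1)))
        have hqmem : ((Finset.univ.sup fun i : Fin (n + 1) => σ i.castSucc),
            σ (Fin.last (n + 1))) ∈ (γ.powerset ×ˢ γ.powerset).filter fun q =>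
            q.1.Nonempty ∧ q.2.Nonempty ∧ q.1 ∪ q.2 = γ := by
          simp only [Finset.mem_filter, Finset.mem_product, Finset.mem_powerset]
          refine ⟨⟨hδsub, hsub _⟩, hδne, hne _, ?_⟩
          rw [← Finset.sup_eq_union, ← sup_univ_castSucc']
          exact hsup
        refine le_trans ?_ (Finset.le_sup hqmem)
        rw [inf_univ_castSucc']
        apply inf_le_inf
        · rw [ih _ _ hδne]
          have hmem' : (fun i : Fin (n + 1) => σ i.castSucc)
              ∈ covers n (Finset.univ.sup fun i : Fin (n + 1) => σ i.castSucc) := by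
            refine mem_covers.2 ⟨?_, fun i => hne _, rfl⟩
            intro i
            exact Finset.le_sup (f := fun i : Fin (n + 1) => σ i.castSucc) (Finset.mem_univ i)
          exact Finset.le_sup
            (f := fun τ : Fin (n + 1) → Finset (fI P K) =>
              Finset.univ.inf fun j => (τ j).inf fun a => (φ j.castSucc).sem a) hmem'
        · rw [pil_sem]

lemma sup_prod_filter {ι κ α : Type*} [DecidableEq κ] [Fintype ι]
    [SemilatticeSup α] [OrderBot α]
    (t : Finset κ) (σ : ι → Finset κ) (h : ∀ i, σ i ⊆ t) (f : ι → κ → α) :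
    ((Finset.univ ×ˢ t).filter fun p : ι × κ => p.2 ∈ σ p.1).sup (fun p => f p.1 p.2)
      = Finset.univ.sup fun i => (σ i).sup (f i) := by
  apply le_antisymm
  · apply Finset.sup_le
    intro p hp
    simp only [Finset.mem_filter, Finset.mem_product] at hp
    exact le_trans (Finset.le_sup hp.2) (Finset.le_sup (f := fun i => (σ i).sup (f i)) (Finset.mem_univ p.1))
  · apply Finset.sup_le
    intro i _
    apply Finset.sup_le
    intro a ha
    have hmem : (i, a) ∈ (Finset.univ ×ˢ t).filter fun p : ι × κ => p.2 ∈ σ p.1 := by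
      simp only [Finset.mem_filter, Finset.mem_product]
      exact ⟨⟨Finset.mem_univ i, h i ha⟩, ha⟩
    exact Finset.le_sup (f := fun p : ι × κ => f p.1 p.2) hmem

end Aux

/-- for a finite nonempty index set `J = Fin (n+1)` and fPIL
formulas `φ j`, `¬(⊎_{j∈J} φ_j) ≡ (⊕_{j∈J} !φ_j) ⊕ ~(⋀f_{j∈J} !φ_j)` as fPCL
formulas. -/
theorem fpcl_neg_bigCoal {P : Type} [Fintype P] (n : ℕ) (φ : Fin (n + 1) → fPIL P) :
    pclEquiv (.cneg (fPCL.bigCoal n fun j => .pil (φ j)))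
      (.oplus (fPCL.bigOplus n fun j => .pil (.fnot (φ j)))
        (fPCL.closure (.pil (fPIL.bigConj n fun j => .fnot (φ j))))) := by
  intro K _ γ hγ
  classical
  -- notation
  set y : Fin (n + 1) → fI P K → K := fun j a => DeMorganAlg.compl ((φ j).sem a) with hy
  -- left-hand side
  have e1 : (fPCL.cneg (fPCL.bigCoal n fun j => .pil (φ j))).sem γ
      = (covers n γ).inf fun σ =>
          ((Finset.univ ×ˢ γ).filter fun p : Fin (n + 1) × fI P K => p.2 ∈ σ p.1).sup
            fun p => y p.1 p.2 := by
    show DeMorganAlg.compl ((fPCL.bigCoal n fun j => .pil (φ j)).sem γ) = _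
    rw [bigCoal_sem n φ γ hγ, dm_compl_finset_sup]
    refine Finset.inf_congr rfl ?_
    intro σ hσ
    obtain ⟨hsub, _, _⟩ := mem_covers.1 hσ
    rw [dm_compl_finset_inf]
    rw [Finset.sup_congr rfl fun j _ => dm_compl_finset_inf (σ j) fun a => (φ j).sem a]
    exact (sup_prod_filter γ σ hsub fun j a => y j a).symm
  -- right-hand side
  have e2 : (fPCL.oplus (fPCL.bigOplus n fun j => .pil (.fnot (φ j)))
        (fPCL.closure (.pil (fPIL.bigConj n fun j => .fnot (φ j))))).sem γ
      = (Finset.univ.sup fun j => γ.inf fun a => y j a)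
        ⊔ (γ.sup fun a => Finset.univ.inf fun j => y j a) := by
    show (fPCL.bigOplus n fun j => .pil (.fnot (φ j))).sem γ
        ⊔ (fPCL.closure (.pil (fPIL.bigConj n fun j => .fnot (φ j)))).sem γ = _
    rw [bigOplus_sem, closure_pil_sem _ _ hγ]
    congr 1
    refine Finset.sup_congr rfl fun a _ => ?_
    rw [bigConj_sem]
    rfl
  rw [e1, e2]
  apply le_antisymm
  · -- hard direction: distribute the infimum over the suprema
    rw [Finset.inf_sup (s := covers n γ)
      (t := fun σ => (Finset.univ ×ˢ γ).filter fun p : Fin (n + 1) × fI P K => p.2 ∈ σ p.1)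
      (f := fun _ p => y p.1 p.2)]
    apply Finset.sup_le
    intro g hg
    rw [Finset.mem_pi] at hg
    set T : K := (covers n γ).attach.inf fun σ => y (g σ.1 σ.2).1 (g σ.1 σ.2).2 with hT
    show T ≤ _
    have hTle : ∀ σ (hσ : σ ∈ covers n γ), (g σ hσ).2 ∈ σ (g σ hσ).1 ∧ T ≤ y (g σ hσ).1 (g σ hσ).2 := by
      intro σ hσ
      have hmem := hg σ hσ
      simp only [Finset.mem_filter, Finset.mem_product] at hmem
      exact ⟨hmem.2, Finset.inf_le (Finset.mem_attach _ ⟨σ, hσ⟩)⟩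
    by_cases h1 : ∃ j, ∀ a ∈ γ, T ≤ y j a
    · obtain ⟨j, hj⟩ := h1
      exact le_sup_of_le_left (le_trans (Finset.le_inf hj) (Finset.le_sup (f := fun j => γ.inf fun a => y j a) (Finset.mem_univ j)))
    by_cases h2 : ∃ a ∈ γ, ∀ j, T ≤ y j a
    · obtain ⟨a, ha, hja⟩ := h2
      exact le_sup_of_le_right
        (le_trans (Finset.le_inf fun j _ => hja j) (Finset.le_sup (f := fun a => Finset.univ.inf fun j => y j a) ha))
    exfalso
    push_neg at h1 h2
    have hσmem : (fun j => γ.filter fun a => ¬ T ≤ y j a) ∈ covers n γ := by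
      refine mem_covers.2 ⟨fun j => by exact Finset.filter_subset _ _, ?_, ?_⟩
      · intro j
        obtain ⟨a, ha, hna⟩ := h1 j
        exact ⟨a, Finset.mem_filter.2 ⟨ha, hna⟩⟩
      · apply Finset.Subset.antisymm
        · show Finset.univ.sup (fun j => γ.filter fun a => ¬ T ≤ y j a) ≤ γ
          exact Finset.sup_le fun j _ => Finset.filter_subset _ _
        · intro a ha
          obtain ⟨j, hj⟩ := h2 a ha
          exact Finset.mem_sup.2 ⟨j, Finset.mem_univ j,
            Finset.mem_filter.2 ⟨ha, hj⟩⟩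
    obtain ⟨hmem, hle⟩ := hTle _ hσmem
    exact (Finset.mem_filter.1 hmem).2 hle
  · -- easy direction
    apply Finset.le_inf
    intro σ hσ
    obtain ⟨hsub, hne, hsup⟩ := mem_covers.1 hσ
    apply sup_le
    · apply Finset.sup_le
      intro j _
      obtain ⟨a, ha⟩ := hne j
      have hmem : (j, a) ∈ (Finset.univ ×ˢ γ).filter
          fun p : Fin (n + 1) × fI P K => p.2 ∈ σ p.1 := by
        simp only [Finset.mem_filter, Finset.mem_product]
        exact ⟨⟨Finset.mem_univ j, hsub j ha⟩, ha⟩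
      exact le_trans (Finset.inf_le (hsub j ha)) (Finset.le_sup (f := fun p : Fin (n+1) × fI P K => y p.1 p.2) hmem)
    · apply Finset.sup_le
      intro a ha
      have ha' : a ∈ Finset.univ.sup σ := hsup.symm ▸ ha
      obtain ⟨j, _, hj⟩ := Finset.mem_sup.1 ha'
      have hmem : (j, a) ∈ (Finset.univ ×ˢ γ).filter
          fun p : Fin (n + 1) × fI P K => p.2 ∈ σ p.1 := by
        simp only [Finset.mem_filter, Finset.mem_product]
        exact ⟨⟨Finset.mem_univ j, ha⟩, hj⟩
      exact le_trans (Finset.inf_le (Finset.mem_univ j)) (Finset.le_sup (f := fun p : Fin (n+1) × fI P K => y p.1 p.2) hmem)
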